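/- Consider the system θ_{t+1} = Aθ_t + Be_t, ε_t = Cθ_t + De_t, with minimum k-step output energy V_k(θ₀) = θ₀ᵀ P_k θ₀, P_k ⪰ 0. Define the feasibility sets by backward recursion: Ξ_N = {θ : ∃e, Cθ + De = 0} and Ξ_t = {θ : ∃e, Cθ + De = 0 and Aθ + Be ∈ Ξ_{t+1}} for t < N. Then for every t = 0,…,N, Ξ_t equals the null space of P_{N−t+1}, i.e., Ξ_t = {θ : P_{N−t+1} θ = 0}. -/

import Mathlib

open Matrix

variable {n s p : ℕ}

/-- Trajectory of `θ_{t+1} = Aθ_t + Be_t` from initial state `θ₀` under input `e`. -/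
def traj (A : Matrix (Fin n) (Fin n) ℝ) (B : Matrix (Fin n) (Fin s) ℝ)
    (θ₀ : Fin n → ℝ) (e : ℕ → Fin s → ℝ) : ℕ → Fin n → ℝ
  | 0 => θ₀
  | t + 1 => A.mulVec (traj A B θ₀ e t) + B.mulVec (e t)

/-- `k`-step output energy `Σ_{t<k} ‖Cθ_t + De_t‖²_Σ`. -/
def cost (A : Matrix (Fin n) (Fin n) ℝ) (B : Matrix (Fin n) (Fin s) ℝ)
    (C : Matrix (Fin p) (Fin n) ℝ) (D : Matrix (Fin p) (Fin s) ℝ)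
    (Sig : Matrix (Fin p) (Fin p) ℝ) (θ₀ : Fin n → ℝ) (e : ℕ → Fin s → ℝ)
    (k : ℕ) : ℝ :=
  ∑ t ∈ Finset.range k,
    (C.mulVec (traj A B θ₀ e t) + D.mulVec (e t)) ⬝ᵥ
      Sig.mulVec (C.mulVec (traj A B θ₀ e t) + D.mulVec (e t))

/-- Feasibility sets, indexed by the number `j` of remaining steps after the
current one: `Xi 0` is the terminal set `Ξ_N`, and `Ξ_t = Xi (N - t)`. -/
def Xi (A : Matrix (Fin n) (Fin n) ℝ) (B : Matrix (Fin n) (Fin s) ℝ)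
    (C : Matrix (Fin p) (Fin n) ℝ) (D : Matrix (Fin p) (Fin s) ℝ) :
    ℕ → Set (Fin n → ℝ)
  | 0 => {θ | ∃ e : Fin s → ℝ, C.mulVec θ + D.mulVec e = 0}
  | j + 1 => {θ | ∃ e : Fin s → ℝ, C.mulVec θ + D.mulVec e = 0 ∧
      A.mulVec θ + B.mulVec e ∈ Xi A B C D j}

lemma traj_shift (A : Matrix (Fin n) (Fin n) ℝ) (B : Matrix (Fin n) (Fin s) ℝ)
    (θ : Fin n → ℝ) (e : ℕ → Fin s → ℝ) (t : ℕ) :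
    traj A B (A.mulVec θ + B.mulVec (e 0)) (fun t' => e (t' + 1)) t
      = traj A B θ e (t + 1) := by
  induction t with
  | zero => rfl
  | succ t ih => simp [traj, ih]

lemma Xi_iff (A : Matrix (Fin n) (Fin n) ℝ) (B : Matrix (Fin n) (Fin s) ℝ)
    (C : Matrix (Fin p) (Fin n) ℝ) (D : Matrix (Fin p) (Fin s) ℝ) (j : ℕ)
    (θ : Fin n → ℝ) :
    θ ∈ Xi A B C D j ↔ ∃ e : ℕ → Fin s → ℝ,
      ∀ t ≤ j, C.mulVec (traj A B θ e t) + D.mulVec (e t) = 0 := by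
  induction j generalizing θ with
  | zero =>
    constructor
    · rintro ⟨e₀, h⟩
      exact ⟨fun _ => e₀, fun t ht => by interval_cases t; exact h⟩
    · rintro ⟨e, h⟩
      exact ⟨e 0, h 0 le_rfl⟩
  | succ j ih =>
    constructor
    · rintro ⟨e₀, h0, hmem⟩
      obtain ⟨eR, hR⟩ := (ih _).mp hmem
      refine ⟨fun t => Nat.rec e₀ (fun t' _ => eR t') t, fun t ht => ?_⟩
      cases t with
      | zero => exact h0
      | succ t =>
        have := traj_shift A B θ (fun t => Nat.rec e₀ (fun t' _ => eR t') t) t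
        simp only [] at this
        rw [← this]
        exact hR t (Nat.le_of_succ_le_succ ht)
    · rintro ⟨e, h⟩
      refine ⟨e 0, h 0 (Nat.zero_le _), (ih _).mpr ⟨fun t' => e (t' + 1), fun t ht => ?_⟩⟩
      rw [traj_shift]
      exact h (t + 1) (Nat.succ_le_succ ht)

theorem feasibility_sets_eq_nullspace
    (A : Matrix (Fin n) (Fin n) ℝ) (B : Matrix (Fin n) (Fin s) ℝ)
    (C : Matrix (Fin p) (Fin n) ℝ) (D : Matrix (Fin p) (Fin s) ℝ)
    (Sig : Matrix (Fin p) (Fin p) ℝ) (hSig : Sig.PosDef)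
    (P : ℕ → Matrix (Fin n) (Fin n) ℝ)
    (hPpsd : ∀ k, (P k).PosSemidef)
    (hPval : ∀ (k : ℕ) (θ₀ : Fin n → ℝ),
      IsLeast {c : ℝ | ∃ e : ℕ → Fin s → ℝ, c = cost A B C D Sig θ₀ e k}
        (θ₀ ⬝ᵥ (P k).mulVec θ₀))
    (N : ℕ) :
    ∀ t ≤ N, Xi A B C D (N - t) =
      {θ : Fin n → ℝ | (P (N - t + 1)).mulVec θ = 0} := by
  have key : ∀ j : ℕ, Xi A B C D j = {θ : Fin n → ℝ | (P (j + 1)).mulVec θ = 0} := by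
    intro j
    ext θ
    have hnull : θ ⬝ᵥ (P (j+1)).mulVec θ = 0 ↔ (P (j+1)).mulVec θ = 0 := by
      have := (hPpsd (j+1)).dotProduct_mulVec_zero_iff θ
      simpa using this
    constructor
    · intro hθ
      obtain ⟨e, h⟩ := (Xi_iff A B C D j θ).mp hθ
      have hc : cost A B C D Sig θ e (j+1) = 0 := by
        unfold cost
        refine Finset.sum_eq_zero fun t ht => ?_
        rw [h t (Nat.lt_succ_iff.mp (Finset.mem_range.mp ht))]
        simp
      have hle : θ ⬝ᵥ (P (j+1)).mulVec θ ≤ 0 :=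
        (hPval (j+1) θ).2 ⟨e, hc.symm⟩
      have hge : 0 ≤ θ ⬝ᵥ (P (j+1)).mulVec θ := by
        have := (hPpsd (j+1)).dotProduct_mulVec_nonneg θ
        simpa using this
      exact hnull.mp (le_antisymm hle hge)
    · intro hθ
      have hval0 : θ ⬝ᵥ (P (j+1)).mulVec θ = 0 := hnull.mpr hθ
      obtain ⟨e, he⟩ := (hPval (j+1) θ).1
      rw [hval0] at he
      have hterm : ∀ t ∈ Finset.range (j+1),
          (C.mulVec (traj A B θ e t) + D.mulVec (e t)) ⬝ᵥ
            Sig.mulVec (C.mulVec (traj A B θ e t) + D.mulVec (e t)) = 0 := by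
        have he' := he.symm
        unfold cost at he'
        rw [Finset.sum_eq_zero_iff_of_nonneg] at he'
        · intro t ht
          exact (he' t ht)
        · intro t _
          have := (hSig.posSemidef).dotProduct_mulVec_nonneg (C.mulVec (traj A B θ e t) + D.mulVec (e t))
          simpa using this
      refine (Xi_iff A B C D j θ).mpr ⟨e, fun t ht => ?_⟩
      by_contra hne
      have := hSig.dotProduct_mulVec_pos hne
      simp only [star_trivial] at this
      exact absurd (hterm t (Finset.mem_range.mpr (Nat.lt_succ_of_le ht))) (ne_of_gt this)
  intro t ht
  exact key (N - t)
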